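/- Let K ⊆ ℝ² be the attractor of the IFS {φ_1, …, φ_9} where φ_1(x) = x/6 + (−15/8, 15/8), φ_2(x) = x/6 + (−5/2, −5/4), φ_3(x) = (1/6)R_{3π/2}x + (−5/4, −5/4), φ_4(x) = (1/6)R_{π/2}x + (−5/2, −5/2), φ_5(x) = (1/6)R_π x + (−5/4, −5/2), φ_6(x) = x/6 + (5/4, −5/4), φ_7(x) = (1/6)R_{3π/2}x + (5/2, −5/4), φ_8(x) = (1/6)R_{π/2}x + (5/4, −5/2), φ_9(x) = (1/6)R_π x + (5/2, −5/2), and let f(x) = x/6 + (15/8, −15/8). Set E_3 = ⋃_{i=6}^{9} φ_i(K) and A = φ_8(E_3) ∪ φ_9(E_3). Then f(K) equals the topological closure of ⋃_{n=0}^{∞} φ_6^n(A), where φ_6^n is the n-fold composition of φ_6. -/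

import Mathlib

open Real

/-- Rotation of `ℝ²` by angle `θ` counterclockwise about the origin. -/
noncomputable def rot2 (θ : ℝ) (p : ℝ × ℝ) : ℝ × ℝ :=
  (Real.cos θ * p.1 - Real.sin θ * p.2, Real.sin θ * p.1 + Real.cos θ * p.2)

/-- The nine similitudes `φ_1, …, φ_9` of Example 2.6 (indexed by `0, …, 8`). -/
noncomputable def exPhi : Fin 9 → ℝ × ℝ → ℝ × ℝ :=
  ![fun p => (1/6 : ℝ) • p + (-(15/8 : ℝ), (15/8 : ℝ)),
    fun p => (1/6 : ℝ) • p + (-(5/2 : ℝ), -(5/4 : ℝ)),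
    fun p => (1/6 : ℝ) • rot2 (3*π/2) p + (-(5/4 : ℝ), -(5/4 : ℝ)),
    fun p => (1/6 : ℝ) • rot2 (π/2) p + (-(5/2 : ℝ), -(5/2 : ℝ)),
    fun p => (1/6 : ℝ) • rot2 π p + (-(5/4 : ℝ), -(5/2 : ℝ)),
    fun p => (1/6 : ℝ) • p + ((5/4 : ℝ), -(5/4 : ℝ)),
    fun p => (1/6 : ℝ) • rot2 (3*π/2) p + ((5/2 : ℝ), -(5/4 : ℝ)),
    fun p => (1/6 : ℝ) • rot2 (π/2) p + ((5/4 : ℝ), -(5/2 : ℝ)),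
    fun p => (1/6 : ℝ) • rot2 π p + ((5/2 : ℝ), -(5/2 : ℝ))]

/-- The similitude `f(x) = x/6 + (15/8, −15/8)` of Example 2.6. -/
noncomputable def exF : ℝ × ℝ → ℝ × ℝ :=
  fun p => (1/6 : ℝ) • p + ((15/8 : ℝ), -(15/8 : ℝ))

lemma rot2_pi_div_two' (p : ℝ × ℝ) : rot2 (π/2) p = (-p.2, p.1) := by simp [rot2]
lemma rot2_pi' (p : ℝ × ℝ) : rot2 π p = (-p.1, -p.2) := by simp [rot2]
lemma rot2_three' (p : ℝ × ℝ) : rot2 (3*π/2) p = (p.2, -p.1) := by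
  have h : 3*π/2 = π + π/2 := by ring
  simp [rot2, h, Real.cos_add, Real.sin_add]

lemma phi0 : exPhi 0 = fun p => (1/6 : ℝ) • p + (-(15/8 : ℝ), (15/8 : ℝ)) := rfl
lemma phi1 : exPhi 1 = fun p => (1/6 : ℝ) • p + (-(5/2 : ℝ), -(5/4 : ℝ)) := rfl
lemma phi2 : exPhi 2 = fun p => (1/6 : ℝ) • rot2 (3*π/2) p + (-(5/4 : ℝ), -(5/4 : ℝ)) := rfl
lemma phi3 : exPhi 3 = fun p => (1/6 : ℝ) • rot2 (π/2) p + (-(5/2 : ℝ), -(5/2 : ℝ)) := rfl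
lemma phi4 : exPhi 4 = fun p => (1/6 : ℝ) • rot2 π p + (-(5/4 : ℝ), -(5/2 : ℝ)) := rfl
lemma phi5 : exPhi 5 = fun p => (1/6 : ℝ) • p + ((5/4 : ℝ), -(5/4 : ℝ)) := rfl
lemma phi6 : exPhi 6 = fun p => (1/6 : ℝ) • rot2 (3*π/2) p + ((5/2 : ℝ), -(5/4 : ℝ)) := rfl
lemma phi7 : exPhi 7 = fun p => (1/6 : ℝ) • rot2 (π/2) p + ((5/4 : ℝ), -(5/2 : ℝ)) := rfl
lemma phi8 : exPhi 8 = fun p => (1/6 : ℝ) • rot2 π p + ((5/2 : ℝ), -(5/2 : ℝ)) := rfl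

lemma comp0 : exF ∘ exPhi 0 = exPhi 5 ∘ exF := by
  funext p
  simp only [Function.comp_apply, phi0, phi5, exF, rot2_pi_div_two', rot2_pi', rot2_three',
    Prod.ext_iff, Prod.fst_add, Prod.snd_add, Prod.smul_fst, Prod.smul_snd, smul_eq_mul]
  constructor <;> ring
lemma comp1 : exF ∘ exPhi 1 = exPhi 7 ∘ exPhi 6 := by
  funext p
  simp only [Function.comp_apply, phi1, phi7, phi6, exF, rot2_pi_div_two', rot2_pi', rot2_three',
    Prod.ext_iff, Prod.fst_add, Prod.snd_add, Prod.smul_fst, Prod.smul_snd, smul_eq_mul]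
  constructor <;> ring
lemma comp2 : exF ∘ exPhi 2 = exPhi 7 ∘ exPhi 8 := by
  funext p
  simp only [Function.comp_apply, phi2, phi7, phi8, exF, rot2_pi_div_two', rot2_pi', rot2_three',
    Prod.ext_iff, Prod.fst_add, Prod.snd_add, Prod.smul_fst, Prod.smul_snd, smul_eq_mul]
  constructor <;> ring
lemma comp3 : exF ∘ exPhi 3 = exPhi 7 ∘ exPhi 5 := by
  funext p
  simp only [Function.comp_apply, phi3, phi7, phi5, exF, rot2_pi_div_two', rot2_pi', rot2_three',
    Prod.ext_iff, Prod.fst_add, Prod.snd_add, Prod.smul_fst, Prod.smul_snd, smul_eq_mul]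
  constructor <;> ring
lemma comp4 : exF ∘ exPhi 4 = exPhi 7 ∘ exPhi 7 := by
  funext p
  simp only [Function.comp_apply, phi4, phi7, exF, rot2_pi_div_two', rot2_pi', rot2_three',
    Prod.ext_iff, Prod.fst_add, Prod.snd_add, Prod.smul_fst, Prod.smul_snd, smul_eq_mul]
  constructor <;> ring
lemma comp5 : exF ∘ exPhi 5 = exPhi 8 ∘ exPhi 8 := by
  funext p
  simp only [Function.comp_apply, phi5, phi8, exF, rot2_pi_div_two', rot2_pi', rot2_three',
    Prod.ext_iff, Prod.fst_add, Prod.snd_add, Prod.smul_fst, Prod.smul_snd, smul_eq_mul]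
  constructor <;> ring
lemma comp6 : exF ∘ exPhi 6 = exPhi 8 ∘ exPhi 7 := by
  funext p
  simp only [Function.comp_apply, phi6, phi8, phi7, exF, rot2_pi_div_two', rot2_pi', rot2_three',
    Prod.ext_iff, Prod.fst_add, Prod.snd_add, Prod.smul_fst, Prod.smul_snd, smul_eq_mul]
  constructor <;> ring
lemma comp7 : exF ∘ exPhi 7 = exPhi 8 ∘ exPhi 6 := by
  funext p
  simp only [Function.comp_apply, phi7, phi8, phi6, exF, rot2_pi_div_two', rot2_pi', rot2_three',
    Prod.ext_iff, Prod.fst_add, Prod.snd_add, Prod.smul_fst, Prod.smul_snd, smul_eq_mul]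
  constructor <;> ring
lemma comp8 : exF ∘ exPhi 8 = exPhi 8 ∘ exPhi 5 := by
  funext p
  simp only [Function.comp_apply, phi8, phi5, exF, rot2_pi_div_two', rot2_pi', rot2_three',
    Prod.ext_iff, Prod.fst_add, Prod.snd_add, Prod.smul_fst, Prod.smul_snd, smul_eq_mul]
  constructor <;> ring

/-- **Example 2.6 (Xiao), structure of `f(K)`.** With `E_3 = ⋃_{i=6}^{9} φ_i(K)`
and `A = φ_8(E_3) ∪ φ_9(E_3)`, one has `f(K) = closure (⋃_{n≥0} φ_6^n(A))`. -/
theorem example_image_eq_closure_union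
    (K : Set (ℝ × ℝ)) (hKne : K.Nonempty) (hKcpt : IsCompact K)
    (hK : K = ⋃ i, exPhi i '' K) :
    exF '' K =
      closure (⋃ n : ℕ,
        (exPhi 5)^[n] ''
          (exPhi 7 '' (exPhi 5 '' K ∪ exPhi 6 '' K ∪ exPhi 7 '' K ∪ exPhi 8 '' K) ∪
           exPhi 8 '' (exPhi 5 '' K ∪ exPhi 6 '' K ∪ exPhi 7 '' K ∪ exPhi 8 '' K))) := by
  set E : Set (ℝ × ℝ) := exPhi 5 '' K ∪ exPhi 6 '' K ∪ exPhi 7 '' K ∪ exPhi 8 '' K with hE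
  set A : Set (ℝ × ℝ) := exPhi 7 '' E ∪ exPhi 8 '' E with hA
  set S : Set (ℝ × ℝ) := ⋃ n : ℕ, (exPhi 5)^[n] '' A with hS
  -- memberships in E
  have h5E : exPhi 5 '' K ⊆ E := fun x hx =>
    Or.inl (Or.inl (Or.inl hx))
  have h6E : exPhi 6 '' K ⊆ E := fun x hx => Or.inl (Or.inl (Or.inr hx))
  have h7E : exPhi 7 '' K ⊆ E := fun x hx => Or.inl (Or.inr hx)
  have h8E : exPhi 8 '' K ⊆ E := fun x hx => Or.inr hx
  have hsubK : ∀ (i : Fin 9), ∀ z ∈ K, exPhi i z ∈ K := by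
    intro i z hz
    rw [hK]
    exact Set.mem_iUnion.2 ⟨i, z, hz, rfl⟩
  -- the master equation f(K) = φ₅(f(K)) ∪ A
  have hmain : exF '' K = exPhi 5 '' (exF '' K) ∪ A := by
    apply Set.Subset.antisymm
    · rintro x ⟨y, hy, rfl⟩
      rw [hK] at hy
      rw [Set.mem_iUnion] at hy
      obtain ⟨i, z, hz, rfl⟩ := hy
      fin_cases i
      · exact Or.inl ⟨exF z, ⟨z, hz, rfl⟩, (congrFun comp0 z).symm⟩
      · exact Or.inr (Or.inl ⟨exPhi 6 z, h6E ⟨z, hz, rfl⟩, (congrFun comp1 z).symm⟩)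
      · exact Or.inr (Or.inl ⟨exPhi 8 z, h8E ⟨z, hz, rfl⟩, (congrFun comp2 z).symm⟩)
      · exact Or.inr (Or.inl ⟨exPhi 5 z, h5E ⟨z, hz, rfl⟩, (congrFun comp3 z).symm⟩)
      · exact Or.inr (Or.inl ⟨exPhi 7 z, h7E ⟨z, hz, rfl⟩, (congrFun comp4 z).symm⟩)
      · exact Or.inr (Or.inr ⟨exPhi 8 z, h8E ⟨z, hz, rfl⟩, (congrFun comp5 z).symm⟩)
      · exact Or.inr (Or.inr ⟨exPhi 7 z, h7E ⟨z, hz, rfl⟩, (congrFun comp6 z).symm⟩)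
      · exact Or.inr (Or.inr ⟨exPhi 6 z, h6E ⟨z, hz, rfl⟩, (congrFun comp7 z).symm⟩)
      · exact Or.inr (Or.inr ⟨exPhi 5 z, h5E ⟨z, hz, rfl⟩, (congrFun comp8 z).symm⟩)
    · rintro x (⟨y, ⟨z, hz, rfl⟩, rfl⟩ | hxA)
      · exact ⟨exPhi 0 z, hsubK 0 z hz, congrFun comp0 z⟩
      · rcases hxA with ⟨y, hyE, rfl⟩ | ⟨y, hyE, rfl⟩
        · rcases hyE with ((⟨z, hz, rfl⟩ | ⟨z, hz, rfl⟩) | ⟨z, hz, rfl⟩) | ⟨z, hz, rfl⟩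
          · exact ⟨exPhi 3 z, hsubK 3 z hz, (congrFun comp3 z)⟩
          · exact ⟨exPhi 1 z, hsubK 1 z hz, (congrFun comp1 z)⟩
          · exact ⟨exPhi 4 z, hsubK 4 z hz, (congrFun comp4 z)⟩
          · exact ⟨exPhi 2 z, hsubK 2 z hz, (congrFun comp2 z)⟩
        · rcases hyE with ((⟨z, hz, rfl⟩ | ⟨z, hz, rfl⟩) | ⟨z, hz, rfl⟩) | ⟨z, hz, rfl⟩
          · exact ⟨exPhi 8 z, hsubK 8 z hz, (congrFun comp8 z)⟩
          · exact ⟨exPhi 7 z, hsubK 7 z hz, (congrFun comp7 z)⟩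
          · exact ⟨exPhi 6 z, hsubK 6 z hz, (congrFun comp6 z)⟩
          · exact ⟨exPhi 5 z, hsubK 5 z hz, (congrFun comp5 z)⟩
  have hcont : Continuous exF := by
    unfold exF; fun_prop
  have hAsub : A ⊆ exF '' K := by
    rw [hmain]; exact Set.subset_union_right
  have hTsub : exPhi 5 '' (exF '' K) ⊆ exF '' K := by
    nth_rewrite 2 [hmain]
    exact Set.subset_union_left
  have hcl : IsClosed (exF '' K) := (hKcpt.image hcont).isClosed
  have hnA : ∀ n : ℕ, (exPhi 5)^[n] '' A ⊆ exF '' K := by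
    intro n
    induction n with
    | zero => simpa using hAsub
    | succ n ih =>
      rw [Function.iterate_succ', Set.image_comp]
      exact (Set.image_mono ih).trans hTsub
  -- subset chain: f(K) ⊆ S ∪ φ₅ⁿ(f(K))
  have hSsub : ∀ n : ℕ, exF '' K ⊆ S ∪ (exPhi 5)^[n] '' (exF '' K) := by
    intro n
    induction n with
    | zero => intro x hx; exact Or.inr (by simpa using hx)
    | succ n ih =>
      intro x hx
      have hx' := hx
      rw [hmain] at hx'
      rcases hx' with ⟨y, hy, rfl⟩ | hxA
      · rcases ih hy with hyS | ⟨w, hw, rfl⟩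
        · rw [hS, Set.mem_iUnion] at hyS
          obtain ⟨m, a, ha, rfl⟩ := hyS
          exact Or.inl (Set.mem_iUnion.2
            ⟨m + 1, a, ha, Function.iterate_succ_apply' _ _ _⟩)
        · exact Or.inr ⟨w, hw, Function.iterate_succ_apply' _ _ _⟩
      · exact Or.inl (Set.mem_iUnion.2 ⟨0, by simpa using hxA⟩)
  -- contraction estimates
  have hdist : ∀ p q : ℝ × ℝ, dist (exPhi 5 p) (exPhi 5 q) = (1/6) * dist p q := by
    intro p q
    rw [phi5]
    simp only []
    rw [dist_add_right, dist_smul₀]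
    norm_num
  have hdistn : ∀ (n : ℕ) (p q : ℝ × ℝ),
      dist ((exPhi 5)^[n] p) ((exPhi 5)^[n] q) = (1/6)^n * dist p q := by
    intro n
    induction n with
    | zero => intro p q; simp
    | succ n ih =>
      intro p q
      rw [Function.iterate_succ_apply', Function.iterate_succ_apply', hdist, ih]
      ring
  obtain ⟨k, hk⟩ := hKne
  have ha : exPhi 7 (exPhi 5 k) ∈ A := Or.inl ⟨exPhi 5 k, h5E ⟨k, hk, rfl⟩, rfl⟩
  set a : ℝ × ℝ := exPhi 7 (exPhi 5 k)
  have haF : a ∈ exF '' K := hAsub ha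
  obtain ⟨C, hC⟩ := Metric.isBounded_iff.mp (hKcpt.image hcont).isBounded
  apply Set.Subset.antisymm
  · -- f(K) ⊆ closure S
    intro x hx
    rw [Metric.mem_closure_iff]
    intro ε hε
    have hB : (0:ℝ) < max C 1 := lt_of_lt_of_le one_pos (le_max_right _ _)
    obtain ⟨n, hn'⟩ := exists_pow_lt_of_lt_one (div_pos hε hB) (by norm_num : (1/6 : ℝ) < 1)
    rcases hSsub n hx with hxS | ⟨y, hy, rfl⟩
    · exact ⟨x, hxS, by simpa using hε⟩
    · refine ⟨(exPhi 5)^[n] a, Set.mem_iUnion.2 ⟨n, a, ha, rfl⟩, ?_⟩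
      calc dist ((exPhi 5)^[n] y) ((exPhi 5)^[n] a) = (1/6)^n * dist y a := hdistn n y a
        _ ≤ (1/6)^n * max C 1 :=
            mul_le_mul_of_nonneg_left ((hC hy haF).trans (le_max_left _ _)) (by positivity)
        _ < (ε / max C 1) * max C 1 := mul_lt_mul_of_pos_right hn' hB
        _ = ε := div_mul_cancel₀ ε hB.ne'
  · exact closure_minimal (Set.iUnion_subset hnA) hcl
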